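/- If X and Y are independent standard normal random variables, then the probability density function of the product Z = XY is p_Z(z) = K_0(|z|)/π for all real z, where K_0 is the modified Bessel function of the second kind of order 0. -/

import Mathlib

open MeasureTheory ProbabilityTheory
open scoped NNReal ENNReal Real
open Set
set_option maxHeartbeats 1000000

/-- Modified Bessel function of the second kind of order 0, via its integral
representation `K₀(x) = ∫_0^∞ exp (-x * cosh t) dt`. -/
noncomputable def besselK0 (x : ℝ) : ℝ :=
  ∫ t in Set.Ioi (0 : ℝ), Real.exp (-x * Real.cosh t)

namespace BesselAux

lemma cosh_lower (t : ℝ) : (1 + |t|) / 2 ≤ Real.cosh t := by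
  rw [Real.cosh_eq]
  have h0 : Real.exp (-|t|) ≤ Real.exp (-t) + Real.exp t - Real.exp |t| + Real.exp (-|t|) := by
    rcases abs_cases t with ⟨h, _⟩ | ⟨h, _⟩ <;> rw [h] <;>
      nlinarith [Real.exp_pos t, Real.exp_pos (-t)]
  have h1 := Real.add_one_le_exp |t|
  have h2 := Real.exp_pos (-|t|)
  linarith

/-- general helper: if `f` is integrable on `(0,∞)` then `x ↦ f |x|` is integrable on `ℝ`. -/
lemma integrable_comp_abs {f : ℝ → ℝ} (hf : IntegrableOn f (Ioi 0)) :
    Integrable fun x : ℝ => f |x| := by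
  have int_Ioi : IntegrableOn (fun x : ℝ => f |x|) (Ioi 0) := by
    refine (hf.congr_fun (fun x hx => ?_) measurableSet_Ioi)
    rw [abs_of_pos hx]
  have int_Iic : IntegrableOn (fun x : ℝ => f |x|) (Iic 0) := by
    rw [← Measure.map_neg_eq_self (volume : Measure ℝ)]
    have m : MeasurableEmbedding fun x : ℝ => -x := (Homeomorph.neg ℝ).measurableEmbedding
    rw [m.integrableOn_map_iff]
    simp_rw [Function.comp_def, abs_neg, neg_preimage, neg_Iic, neg_zero]
    exact (integrableOn_Ici_iff_integrableOn_Ioi).mpr int_Ioi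
  have := int_Iic.union int_Ioi
  rwa [Iic_union_Ioi, integrableOn_univ] at this

lemma integrableOn_exp_neg_mul_cosh_Ioi {c : ℝ} (hc : 0 < c) :
    IntegrableOn (fun t : ℝ => Real.exp (-c * Real.cosh t)) (Ioi 0) := by
  have h2 : (0:ℝ) < c / 2 := by positivity
  refine ((exp_neg_integrableOn_Ioi 0 h2).const_mul (Real.exp (-c / 2))).mono'
    ((Real.continuous_exp.comp (continuous_const.mul Real.continuous_cosh)).aestronglyMeasurable) ?_
  filter_upwards [ae_restrict_mem measurableSet_Ioi] with t ht
  rw [Real.norm_eq_abs, abs_of_pos (Real.exp_pos _), ← Real.exp_add]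
  apply Real.exp_le_exp.mpr
  have := cosh_lower t
  rw [abs_of_pos ht] at this
  nlinarith

lemma integrable_exp_neg_mul_cosh {c : ℝ} (hc : 0 < c) :
    Integrable fun t : ℝ => Real.exp (-c * Real.cosh t) := by
  have h := integrable_comp_abs (f := fun s => Real.exp (-c * Real.cosh s))
    (integrableOn_exp_neg_mul_cosh_Ioi hc)
  simpa only [Real.cosh_abs] using h

lemma integral_exp_neg_mul_cosh {c : ℝ} (hc : 0 < c) :
    ∫ t : ℝ, Real.exp (-c * Real.cosh t) = 2 * besselK0 c := by
  have h := integral_comp_abs (f := fun s => Real.exp (-c * Real.cosh s))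
  simp only [Real.cosh_abs] at h
  rw [h]; rfl

lemma range_sqrt_mul_exp {c : ℝ} (hc : 0 < c) :
    (fun t : ℝ => Real.sqrt c * Real.exp t) '' univ = Ioi 0 := by
  rw [image_univ]
  ext y
  simp only [mem_range, mem_Ioi]
  constructor
  · rintro ⟨t, rfl⟩; positivity
  · intro hy
    refine ⟨Real.log (y / Real.sqrt c), ?_⟩
    rw [Real.exp_log (by positivity), mul_comm, div_mul_cancel₀ _ (by positivity)]

section CoV
variable {c : ℝ}

lemma hasderiv (hc : 0 < c) : ∀ x ∈ (univ : Set ℝ), HasDerivWithinAt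
    (fun t => Real.sqrt c * Real.exp t) (Real.sqrt c * Real.exp x) univ x :=
  fun x _ => ((Real.hasDerivAt_exp x).const_mul (Real.sqrt c)).hasDerivWithinAt

lemma hinj (hc : 0 < c) : InjOn (fun t : ℝ => Real.sqrt c * Real.exp t) univ := by
  intro a _ b _ h
  have hsc : (0:ℝ) < Real.sqrt c := Real.sqrt_pos.mpr hc
  exact Real.exp_injective (mul_left_cancel₀ hsc.ne' h)

lemma pointwise_eq (hc : 0 < c) (t : ℝ) : |Real.sqrt c * Real.exp t| •
    (Real.exp (-(((Real.sqrt c * Real.exp t) ^ 2 + c ^ 2 / (Real.sqrt c * Real.exp t) ^ 2) / 2))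
      * (Real.sqrt c * Real.exp t)⁻¹) = Real.exp (-c * Real.cosh (2 * t)) := by
  have hpos : 0 < Real.sqrt c * Real.exp t := by positivity
  have h1 : (Real.sqrt c * Real.exp t) ^ 2 = c * Real.exp (2 * t) := by
    rw [mul_pow, Real.sq_sqrt hc.le, sq, ← Real.exp_add, two_mul]
  have h2 : c ^ 2 / (c * Real.exp (2 * t)) = c * Real.exp (-(2 * t)) := by
    rw [Real.exp_neg, sq]
    field_simp
  have h3 : -((c * Real.exp (2 * t) + c * Real.exp (-(2 * t))) / 2)
      = -c * Real.cosh (2 * t) := by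
    rw [Real.cosh_eq]; ring
  rw [smul_eq_mul, abs_of_pos hpos, h1, h2, h3, mul_comm (Real.exp _) _,
    ← mul_assoc, mul_inv_cancel₀ hpos.ne', one_mul]

lemma integral_Ioi_eq_besselK0 (hc : 0 < c) :
    (∫ x in Ioi (0:ℝ), Real.exp (-((x ^ 2 + c ^ 2 / x ^ 2) / 2)) * x⁻¹) = besselK0 c := by
  have key := integral_image_eq_integral_abs_deriv_smul MeasurableSet.univ (hasderiv hc)
    (hinj hc) (fun x => Real.exp (-((x ^ 2 + c ^ 2 / x ^ 2) / 2)) * x⁻¹)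
  rw [range_sqrt_mul_exp hc] at key
  rw [key, Measure.restrict_univ]
  have : (fun t : ℝ => |Real.sqrt c * Real.exp t| •
      (Real.exp (-(((Real.sqrt c * Real.exp t) ^ 2 + c ^ 2 / (Real.sqrt c * Real.exp t) ^ 2) / 2))
        * (Real.sqrt c * Real.exp t)⁻¹))
      = fun t : ℝ => (fun u => Real.exp (-c * Real.cosh u)) (2 * t) := by
    funext t; exact pointwise_eq hc t
  rw [this, Measure.integral_comp_mul_left (fun u => Real.exp (-c * Real.cosh u)) 2,
    integral_exp_neg_mul_cosh hc, smul_eq_mul]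
  rw [abs_of_pos (by norm_num : (0:ℝ) < 2⁻¹)]
  ring

lemma integrableOn_Ioi_key (hc : 0 < c) :
    IntegrableOn (fun x : ℝ => Real.exp (-((x ^ 2 + c ^ 2 / x ^ 2) / 2)) * x⁻¹) (Ioi 0) := by
  have key := integrableOn_image_iff_integrableOn_abs_deriv_smul MeasurableSet.univ (hasderiv hc)
    (hinj hc) (fun x => Real.exp (-((x ^ 2 + c ^ 2 / x ^ 2) / 2)) * x⁻¹)
  rw [range_sqrt_mul_exp hc] at key
  rw [key, integrableOn_univ]
  refine ((integrable_exp_neg_mul_cosh hc).comp_mul_left' two_ne_zero).congr ?_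
  filter_upwards with t
  exact (pointwise_eq hc t).symm

end CoV
lemma W_pointwise (z x : ℝ) :
    gaussianPDFReal 0 1 x * (|x⁻¹| * gaussianPDFReal 0 1 (x⁻¹ * z))
      = (2 * π)⁻¹ * ((fun s : ℝ => Real.exp (-((s ^ 2 + |z| ^ 2 / s ^ 2) / 2)) * s⁻¹) |x|) := by
  have hs : (Real.sqrt (2 * π))⁻¹ * (Real.sqrt (2 * π))⁻¹ = (2 * π)⁻¹ := by
    rw [← mul_inv, Real.mul_self_sqrt (by positivity)]
  have hexp : Real.exp (-x ^ 2 / 2) * Real.exp (-(x⁻¹ * z) ^ 2 / 2)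
      = Real.exp (-((|x| ^ 2 + |z| ^ 2 / |x| ^ 2) / 2)) := by
    rw [← Real.exp_add, sq_abs, sq_abs]
    congr 1
    rw [inv_mul_eq_div, div_pow]
    ring
  simp only [gaussianPDFReal, NNReal.coe_one, mul_one, sub_zero, abs_inv]
  calc (Real.sqrt (2 * π))⁻¹ * Real.exp (-x ^ 2 / 2) *
        (|x|⁻¹ * ((Real.sqrt (2 * π))⁻¹ * Real.exp (-(x⁻¹ * z) ^ 2 / 2)))
      = ((Real.sqrt (2 * π))⁻¹ * (Real.sqrt (2 * π))⁻¹) *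
        ((Real.exp (-x ^ 2 / 2) * Real.exp (-(x⁻¹ * z) ^ 2 / 2)) * |x|⁻¹) := by
        ring
    _ = (2 * π)⁻¹ * (Real.exp (-((|x| ^ 2 + |z| ^ 2 / |x| ^ 2) / 2)) * |x|⁻¹) := by
        rw [hs, hexp]

lemma integral_W {z : ℝ} (hz : z ≠ 0) :
    ∫ x : ℝ, gaussianPDFReal 0 1 x * (|x⁻¹| * gaussianPDFReal 0 1 (x⁻¹ * z))
      = besselK0 |z| / π := by
  have habs : 0 < |z| := abs_pos.mpr hz
  rw [funext (W_pointwise z), integral_const_mul,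
    integral_comp_abs (f := fun s : ℝ => Real.exp (-((s ^ 2 + |z| ^ 2 / s ^ 2) / 2)) * s⁻¹),
    integral_Ioi_eq_besselK0 habs]
  have : π ≠ 0 := Real.pi_ne_zero
  field_simp

lemma integrable_W {z : ℝ} (hz : z ≠ 0) :
    Integrable fun x : ℝ => gaussianPDFReal 0 1 x * (|x⁻¹| * gaussianPDFReal 0 1 (x⁻¹ * z)) := by
  have habs : 0 < |z| := abs_pos.mpr hz
  have h := ((integrable_comp_abs (integrableOn_Ioi_key habs)).const_mul ((2 * π)⁻¹))
  refine h.congr ?_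
  filter_upwards with x
  exact (W_pointwise z x).symm

lemma lintegral_W {z : ℝ} (hz : z ≠ 0) :
    ∫⁻ x : ℝ, ENNReal.ofReal (gaussianPDFReal 0 1 x) *
        (ENNReal.ofReal |x⁻¹| * ENNReal.ofReal (gaussianPDFReal 0 1 (x⁻¹ * z)))
      = ENNReal.ofReal (besselK0 |z| / π) := by
  have heq : ∀ x : ℝ, ENNReal.ofReal (gaussianPDFReal 0 1 x) *
        (ENNReal.ofReal |x⁻¹| * ENNReal.ofReal (gaussianPDFReal 0 1 (x⁻¹ * z)))
      = ENNReal.ofReal (gaussianPDFReal 0 1 x * (|x⁻¹| * gaussianPDFReal 0 1 (x⁻¹ * z))) := by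
    intro x
    rw [ENNReal.ofReal_mul (gaussianPDFReal_nonneg _ _ _), ENNReal.ofReal_mul (abs_nonneg _)]
  simp_rw [heq]
  rw [← ofReal_integral_eq_lintegral_ofReal (integrable_W hz) (Filter.Eventually.of_forall fun x =>
    mul_nonneg (gaussianPDFReal_nonneg _ _ _)
      (mul_nonneg (abs_nonneg _) (gaussianPDFReal_nonneg _ _ _))), integral_W hz]

lemma lintegral_W' {z : ℝ} (hz : z ≠ 0) :
    ∫⁻ x : ℝ, gaussianPDF 0 1 x *
        (ENNReal.ofReal |x⁻¹| * gaussianPDF 0 1 (x⁻¹ * z))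
      = ENNReal.ofReal (besselK0 |z| / π) := by
  simp only [gaussianPDF]
  exact lintegral_W hz

lemma measurable_besselK0_abs : Measurable fun z : ℝ => besselK0 |z| := by
  have hc : Continuous fun p : ℝ × ℝ => Real.exp (-|p.1| * Real.cosh p.2) :=
    Real.continuous_exp.comp ((continuous_abs.comp continuous_fst).neg.mul
      (Real.continuous_cosh.comp continuous_snd))
  exact (hc.stronglyMeasurable.integral_prod_right' (ν := volume.restrict (Ioi (0:ℝ)))).measurable

lemma map_mul_gauss :
    Measure.map (fun p : ℝ × ℝ => p.1 * p.2) ((gaussianReal 0 1).prod (gaussianReal 0 1))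
      = volume.withDensity fun z => ENNReal.ofReal (besselK0 |z| / π) := by
  have hφ : Measurable (gaussianPDF 0 1) := measurable_gaussianPDF 0 1
  have hφtop : ∀ x : ℝ, gaussianPDF 0 1 x ≠ ⊤ := fun x => by simp only [gaussianPDF]; exact ENNReal.ofReal_ne_top
  have hmul : Measurable fun p : ℝ × ℝ => p.1 * p.2 := measurable_fst.mul measurable_snd
  have hgr : gaussianReal 0 1 = volume.withDensity (gaussianPDF 0 1) :=
    gaussianReal_of_var_ne_zero 0 one_ne_zero
  have h0 : ∀ᵐ x : ℝ ∂(volume : Measure ℝ), x ≠ 0 := by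
    rw [ae_iff]
    simp only [not_not, setOf_eq_eq_singleton]
    exact measure_singleton 0
  refine Measure.ext fun s hs => ?_
  have hT : MeasurableSet ((fun p : ℝ × ℝ => p.1 * p.2) ⁻¹' s) := hmul hs
  have hinner : Measurable fun x : ℝ => (volume.withDensity (gaussianPDF 0 1))
      (Prod.mk x ⁻¹' ((fun p : ℝ × ℝ => p.1 * p.2) ⁻¹' s)) :=
    measurable_measure_prodMk_left hT
  have hindtop : ∀ u : ℝ, s.indicator (1 : ℝ → ℝ≥0∞) u ≠ ⊤ := by
    intro u; by_cases hu : u ∈ s <;> simp [hu]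
  have stepB : ∀ x : ℝ, x ≠ 0 → (volume.withDensity (gaussianPDF 0 1))
      (Prod.mk x ⁻¹' ((fun p : ℝ × ℝ => p.1 * p.2) ⁻¹' s))
      = ENNReal.ofReal |x⁻¹| * ∫⁻ u, gaussianPDF 0 1 (x⁻¹ * u) * s.indicator 1 u := by
    intro x hx
    have hpre : MeasurableSet (Prod.mk x ⁻¹' ((fun p : ℝ × ℝ => p.1 * p.2) ⁻¹' s)) :=
      measurable_prodMk_left hT
    have hH : Measurable fun u : ℝ =>
        s.indicator (fun u => gaussianPDF 0 1 (x⁻¹ * u)) u :=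
      (hφ.comp (measurable_const_mul x⁻¹)).indicator hs
    rw [withDensity_apply _ hpre, ← lintegral_indicator hpre]
    have key : ∀ y : ℝ, (Prod.mk x ⁻¹' ((fun p : ℝ × ℝ => p.1 * p.2) ⁻¹' s)).indicator
          (gaussianPDF 0 1) y
        = s.indicator (fun u => gaussianPDF 0 1 (x⁻¹ * u)) (x * y) := by
      intro y
      by_cases h : x * y ∈ s
      · rw [Set.indicator_of_mem (by exact h), Set.indicator_of_mem h,
          inv_mul_cancel_left₀ hx]
      · rw [Set.indicator_of_notMem (by exact h), Set.indicator_of_notMem h]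
    rw [lintegral_congr key, ← lintegral_map hH (measurable_const_mul x),
      Real.map_volume_mul_left hx, lintegral_smul_measure]
    congr 1
    refine lintegral_congr fun u => ?_
    by_cases hu : u ∈ s <;> simp [hu]
  have hF : Measurable (Function.uncurry fun x u : ℝ => gaussianPDF 0 1 x *
      (ENNReal.ofReal |x⁻¹| * (gaussianPDF 0 1 (x⁻¹ * u) * s.indicator 1 u))) :=
    (hφ.comp measurable_fst).mul ((measurable_fst.inv.abs.ennreal_ofReal).mul
      ((hφ.comp (measurable_fst.inv.mul measurable_snd)).mul
        ((measurable_one.indicator hs).comp measurable_snd)))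
  rw [Measure.map_apply hmul hs, withDensity_apply _ hs, Measure.prod_apply hT, hgr,
    lintegral_withDensity_eq_lintegral_mul _ hφ hinner]
  calc ∫⁻ x, (gaussianPDF 0 1 * fun x => (volume.withDensity (gaussianPDF 0 1))
        (Prod.mk x ⁻¹' ((fun p : ℝ × ℝ => p.1 * p.2) ⁻¹' s))) x
      = ∫⁻ x, ∫⁻ u, gaussianPDF 0 1 x *
          (ENNReal.ofReal |x⁻¹| * (gaussianPDF 0 1 (x⁻¹ * u) * s.indicator 1 u)) := by
        refine lintegral_congr_ae ?_
        filter_upwards [h0] with x hx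
        simp only [Pi.mul_apply]
        rw [stepB x hx, ← lintegral_const_mul' _ _ ENNReal.ofReal_ne_top,
          ← lintegral_const_mul' _ _ (hφtop x)]
    _ = ∫⁻ u, ∫⁻ x, gaussianPDF 0 1 x *
          (ENNReal.ofReal |x⁻¹| * (gaussianPDF 0 1 (x⁻¹ * u) * s.indicator 1 u)) :=
        lintegral_lintegral_swap hF.aemeasurable
    _ = ∫⁻ u, s.indicator 1 u * ∫⁻ x, gaussianPDF 0 1 x *
          (ENNReal.ofReal |x⁻¹| * gaussianPDF 0 1 (x⁻¹ * u)) := by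
        refine lintegral_congr fun u => ?_
        rw [← lintegral_const_mul' _ _ (hindtop u)]
        refine lintegral_congr fun x => ?_
        ring
    _ = ∫⁻ u, s.indicator 1 u * ENNReal.ofReal (besselK0 |u| / π) := by
        refine lintegral_congr_ae ?_
        filter_upwards [h0] with u hu
        rw [lintegral_W' hu]
    _ = ∫⁻ u in s, ENNReal.ofReal (besselK0 |u| / π) := by
        rw [← lintegral_indicator hs]
        refine lintegral_congr fun u => ?_
        by_cases hu : u ∈ s <;> simp [hu]

end BesselAux

/-- If `X` and `Y` are independent standard normal random variables, then the
probability density function of `Z = X * Y` is `z ↦ K₀(|z|) / π`. -/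
theorem product_of_std_normals_pdf
    {Ω : Type*} [MeasureSpace Ω] [IsProbabilityMeasure (ℙ : Measure Ω)]
    (X Y : Ω → ℝ) (hX : Measurable X) (hY : Measurable Y)
    (hXlaw : Measure.map X ℙ = gaussianReal 0 1)
    (hYlaw : Measure.map Y ℙ = gaussianReal 0 1)
    (hindep : IndepFun X Y ℙ) :
    pdf (fun ω => X ω * Y ω) ℙ volume
      =ᵐ[volume] fun z => ENNReal.ofReal (besselK0 |z| / Real.pi) := by
  have hmul : Measurable fun p : ℝ × ℝ => p.1 * p.2 := measurable_fst.mul measurable_snd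
  have hpair : Measure.map (fun ω => (X ω, Y ω)) ℙ = (gaussianReal 0 1).prod (gaussianReal 0 1) := by
    rw [(indepFun_iff_map_prod_eq_prod_map_map hX.aemeasurable hY.aemeasurable).mp hindep,
      hXlaw, hYlaw]
  have hmap : Measure.map (fun ω => X ω * Y ω) ℙ
      = volume.withDensity fun z => ENNReal.ofReal (besselK0 |z| / Real.pi) := by
    rw [show (fun ω => X ω * Y ω)
        = (fun p : ℝ × ℝ => p.1 * p.2) ∘ (fun ω => (X ω, Y ω)) from rfl,
      ← Measure.map_map hmul (hX.prodMk hY), hpair, BesselAux.map_mul_gauss]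
  have hgmeas : Measurable fun z : ℝ => ENNReal.ofReal (besselK0 |z| / Real.pi) :=
    (BesselAux.measurable_besselK0_abs.div_const Real.pi).ennreal_ofReal
  haveI : HasPDF (fun ω => X ω * Y ω) ℙ volume :=
    hasPDF_of_map_eq_withDensity (hX.mul hY).aemeasurable _ hgmeas.aemeasurable hmap
  exact (pdf.eq_of_map_eq_withDensity' _ hgmeas.aemeasurable).mp hmap
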